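/- Let ω : (y,θ) ↦ (x,p) be the C¹ diffeomorphism of ℝ^{2N} defined by solving y_i = x_i + Σ_{j≠i} ψ_θ(x_i−x_j, θ_i−θ_j) for x and setting p_i = θ_i + Σ_{j≠i} ψ_x(x_i−x_j, θ_i−θ_j), and write ω^{−1}(x,p) = (Y(x,p), Θ(x,p)). Then (Y,Θ) are canonical coordinates: for all i,j, {Y_i, Θ_j} = δ_{ij}, {Y_i, Y_j} = 0, and {Θ_i, Θ_j} = 0, where {f,g} = Σ_k (∂f/∂x_k ∂g/∂p_k − ∂f/∂p_k ∂g/∂x_k) is the canonical Poisson bracket on ℝ^{2N}. -/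

import Mathlib

open Finset


open ContinuousLinearMap in
lemma clm2_eq (L : (ℝ×ℝ) →L[ℝ] ℝ) : L = L (1,0) • fst ℝ ℝ ℝ + L (0,1) • snd ℝ ℝ ℝ := by
  apply ContinuousLinearMap.ext
  intro w
  have hw : w = w.1 • ((1:ℝ),(0:ℝ)) + w.2 • ((0:ℝ),(1:ℝ)) := by
    apply Prod.ext <;> simp
  rw [ContinuousLinearMap.add_apply, ContinuousLinearMap.smul_apply,
    ContinuousLinearMap.smul_apply, ContinuousLinearMap.coe_fst',
    ContinuousLinearMap.coe_snd']
  nth_rewrite 1 [hw]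
  rw [map_add, map_smul, map_smul]
  simp [smul_eq_mul]
  ring
open ContinuousLinearMap in
lemma psi_calc (ψ ψx ψθ ψxθ : ℝ → ℝ → ℝ)
    (hC2 : ContDiff ℝ 2 (fun q : ℝ × ℝ => ψ q.1 q.2))
    (hψx : ∀ x t, HasDerivAt (fun x' => ψ x' t) (ψx x t) x)
    (hψθ : ∀ x t, HasDerivAt (fun t' => ψ x t') (ψθ x t) t)
    (hψxθ : ∀ x t, HasDerivAt (fun t' => ψx x t') (ψxθ x t) t)
    (hsym : ∀ x t, ψ (-x) (-t) = ψ x t) :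
    ∃ ψxx ψθθ : ℝ → ℝ → ℝ,
      (∀ x t, HasFDerivAt (fun q : ℝ × ℝ => ψx q.1 q.2)
        (ψxx x t • fst ℝ ℝ ℝ + ψxθ x t • snd ℝ ℝ ℝ) (x, t)) ∧
      (∀ x t, HasFDerivAt (fun q : ℝ × ℝ => ψθ q.1 q.2)
        (ψxθ x t • fst ℝ ℝ ℝ + ψθθ x t • snd ℝ ℝ ℝ) (x, t)) ∧
      (∀ x t, ψxθ (-x) (-t) = ψxθ x t) ∧
      (∀ x t, ψxx (-x) (-t) = ψxx x t) ∧
      (∀ x t, ψθθ (-x) (-t) = ψθθ x t) := by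
  classical
  set Ψ : ℝ × ℝ → ℝ := fun q => ψ q.1 q.2 with hΨ
  have hΨd : Differentiable ℝ Ψ := hC2.differentiable (by norm_num)
  have hD1 : ContDiff ℝ 1 (fderiv ℝ Ψ) := hC2.fderiv_right (by norm_num)
  set f'' : ℝ × ℝ → (ℝ×ℝ) →L[ℝ] (ℝ×ℝ) →L[ℝ] ℝ := fun q => fderiv ℝ (fderiv ℝ Ψ) q with hf''
  have hf''At : ∀ q, HasFDerivAt (fderiv ℝ Ψ) (f'' q) q :=
    fun q => (hD1.differentiable one_ne_zero q).hasFDerivAt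
  have hsymm : ∀ q v w, f'' q v w = f'' q w v :=
    fun q v w => second_derivative_symmetric (fun y => (hΨd y).hasFDerivAt) (hf''At q) v w
  -- partial derivatives as applications of fderiv
  have hfx : ∀ x t : ℝ, fderiv ℝ Ψ (x, t) (1, 0) = ψx x t := by
    intro x t
    have hline : HasDerivAt (fun s : ℝ => ((s, t) : ℝ × ℝ)) (1, 0) x :=
      HasDerivAt.prodMk (hasDerivAt_id x) (hasDerivAt_const x t)
    exact (HasFDerivAt.comp_hasDerivAt (l := Ψ) x (hΨd (x, t)).hasFDerivAt hline).unique (hψx x t)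
  have hfθ : ∀ x t : ℝ, fderiv ℝ Ψ (x, t) (0, 1) = ψθ x t := by
    intro x t
    have hline : HasDerivAt (fun s : ℝ => ((x, s) : ℝ × ℝ)) (0, 1) t :=
      HasDerivAt.prodMk (hasDerivAt_const t x) (hasDerivAt_id t)
    exact ((hΨd (x, t)).hasFDerivAt.comp_hasDerivAt t hline).unique (hψθ x t)
  -- derivative of Ψx
  have hΨxAt : ∀ q : ℝ × ℝ, HasFDerivAt (fun q' : ℝ × ℝ => ψx q'.1 q'.2)
      ((f'' q).flip (1,0)) q := by
    intro q
    have h1 : HasFDerivAt (fun q' => fderiv ℝ Ψ q' (1,0)) ((f'' q).flip (1,0)) q := by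
      have := (hf''At q).clm_apply (hasFDerivAt_const ((1:ℝ),(0:ℝ)) q)
      simpa using this
    exact h1.congr_of_eventuallyEq (Filter.Eventually.of_forall fun q' => (hfx q'.1 q'.2).symm)
  have hΨθAt : ∀ q : ℝ × ℝ, HasFDerivAt (fun q' : ℝ × ℝ => ψθ q'.1 q'.2)
      ((f'' q).flip (0,1)) q := by
    intro q
    have h1 : HasFDerivAt (fun q' => fderiv ℝ Ψ q' (0,1)) ((f'' q).flip (0,1)) q := by
      have := (hf''At q).clm_apply (hasFDerivAt_const ((0:ℝ),(1:ℝ)) q)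
      simpa using this
    exact h1.congr_of_eventuallyEq (Filter.Eventually.of_forall fun q' => (hfθ q'.1 q'.2).symm)
  -- identify the mixed partial
  have hmix : ∀ x t : ℝ, f'' (x,t) (0,1) (1,0) = ψxθ x t := by
    intro x t
    have hline : HasDerivAt (fun s : ℝ => ((x, s) : ℝ × ℝ)) (0, 1) t :=
      HasDerivAt.prodMk (hasDerivAt_const t x) (hasDerivAt_id t)
    have := (hΨxAt (x,t)).comp_hasDerivAt t hline
    have h2 := this.unique (hψxθ x t)
    simpa using h2
  -- one-dimensional second partials
  have hDx : ∀ x t : ℝ, HasDerivAt (fun x' => ψx x' t) (f'' (x,t) (1,0) (1,0)) x := by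
    intro x t
    have hline : HasDerivAt (fun s : ℝ => ((s, t) : ℝ × ℝ)) (1, 0) x :=
      HasDerivAt.prodMk (hasDerivAt_id x) (hasDerivAt_const x t)
    have := (hΨxAt (x,t)).comp_hasDerivAt x hline
    exact this
  have hDθ : ∀ x t : ℝ, HasDerivAt (fun t' => ψθ x t') (f'' (x,t) (0,1) (0,1)) t := by
    intro x t
    have hline : HasDerivAt (fun s : ℝ => ((x, s) : ℝ × ℝ)) (0, 1) t :=
      HasDerivAt.prodMk (hasDerivAt_const t x) (hasDerivAt_id t)
    have := (hΨθAt (x,t)).comp_hasDerivAt t hline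
    exact this
  -- first-order reflection identities
  have hψx_neg : ∀ x t : ℝ, ψx (-x) (-t) = -ψx x t := by
    intro x t
    have h1 : HasDerivAt (fun x' : ℝ => ψ (-x') (-t)) (ψx (-x) (-t) * (-1)) x :=
      HasDerivAt.comp x (hψx (-x) (-t)) (hasDerivAt_neg x)
    have he : (fun x' : ℝ => ψ (-x') (-t)) = fun x' => ψ x' t :=
      funext fun x' => hsym x' t
    rw [he] at h1
    have := h1.unique (hψx x t)
    linarith
  have hψθ_neg : ∀ x t : ℝ, ψθ (-x) (-t) = -ψθ x t := by
    intro x t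
    have h1 : HasDerivAt (fun t' : ℝ => ψ (-x) (-t')) (ψθ (-x) (-t) * (-1)) t :=
      HasDerivAt.comp t (hψθ (-x) (-t)) (hasDerivAt_neg t)
    have he : (fun t' : ℝ => ψ (-x) (-t')) = fun t' => ψ x t' := by
      funext t'; exact hsym x t'
    rw [he] at h1
    have := h1.unique (hψθ x t)
    linarith
  refine ⟨fun x t => f'' (x,t) (1,0) (1,0), fun x t => f'' (x,t) (0,1) (0,1),
    ?_, ?_, ?_, ?_, ?_⟩
  · intro x t
    have h0 := hΨxAt (x,t)
    have heq : ((f'' (x,t)).flip ((1:ℝ),(0:ℝ)))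
        = f'' (x,t) (1,0) (1,0) • fst ℝ ℝ ℝ + ψxθ x t • snd ℝ ℝ ℝ := by
      rw [clm2_eq ((f'' (x,t)).flip ((1:ℝ),(0:ℝ)))]
      simp only [ContinuousLinearMap.flip_apply]
      rw [hmix x t]
    rwa [heq] at h0
  · intro x t
    have h0 := hΨθAt (x,t)
    have heq : ((f'' (x,t)).flip ((0:ℝ),(1:ℝ)))
        = ψxθ x t • fst ℝ ℝ ℝ + f'' (x,t) (0,1) (0,1) • snd ℝ ℝ ℝ := by
      rw [clm2_eq ((f'' (x,t)).flip ((0:ℝ),(1:ℝ)))]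
      simp only [ContinuousLinearMap.flip_apply]
      rw [hsymm (x,t) (1,0) (0,1), hmix x t]
    rwa [heq] at h0
  · -- ψxθ reflection
    intro x t
    have h1 : HasDerivAt (fun t' : ℝ => ψx (-x) (-t')) (ψxθ (-x) (-t) * (-1)) t :=
      HasDerivAt.comp t (hψxθ (-x) (-t)) (hasDerivAt_neg t)
    have he : (fun t' : ℝ => ψx (-x) (-t')) = fun t' => -ψx x t' :=
      funext fun t' => hψx_neg x t'
    rw [he] at h1
    have := h1.unique ((hψxθ x t).neg)
    linarith
  · -- ψxx reflection
    intro x t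
    have h1 : HasDerivAt (fun x' : ℝ => ψx (-x') (-t)) (f'' (-x,-t) (1,0) (1,0) * (-1)) x :=
      HasDerivAt.comp x (hDx (-x) (-t)) (hasDerivAt_neg x)
    have he : (fun x' : ℝ => ψx (-x') (-t)) = fun x' => -ψx x' t :=
      funext fun x' => hψx_neg x' t
    rw [he] at h1
    have := h1.unique ((hDx x t).neg)
    linarith
  · -- ψθθ reflection
    intro x t
    have h1 : HasDerivAt (fun t' : ℝ => ψθ (-x) (-t')) (f'' (-x,-t) (0,1) (0,1) * (-1)) t :=
      HasDerivAt.comp t (hDθ (-x) (-t)) (hasDerivAt_neg t)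
    have he : (fun t' : ℝ => ψθ (-x) (-t')) = fun t' => -ψθ x t' :=
      funext fun t' => hψθ_neg x t'
    rw [he] at h1
    have := h1.unique ((hDθ x t).neg)
    linarith


def matOf {N : ℕ} (c : Fin N → Fin N → ℝ) : Matrix (Fin N) (Fin N) ℝ :=
  Matrix.of fun i k => if k = i then ∑ j ∈ Finset.univ.erase i, c i j else -(c i k)

lemma matOf_mul_apply {N : ℕ} (c : Fin N → Fin N → ℝ) (M : Matrix (Fin N) (Fin N) ℝ)
    (i l : Fin N) :
    (matOf c * M) i l = ∑ j ∈ Finset.univ.erase i, c i j * (M i l - M j l) := by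
  classical
  rw [Matrix.mul_apply]
  rw [← Finset.add_sum_erase _ _ (Finset.mem_univ i)]
  have h1 : matOf c i i = ∑ j ∈ Finset.univ.erase i, c i j := by simp [matOf]
  have h2 : ∀ k ∈ Finset.univ.erase i, matOf c i k * M k l = -(c i k * M k l) := by
    intro k hk
    have : k ≠ i := Finset.ne_of_mem_erase hk
    simp [matOf, this, neg_mul]
  rw [h1, Finset.sum_congr rfl h2]
  rw [Finset.sum_mul, ← Finset.sum_add_distrib]
  exact Finset.sum_congr rfl fun j _ => by ring

open Matrix in
lemma matOf_transpose {N : ℕ} (c : Fin N → Fin N → ℝ) (hc : ∀ i j, c i j = c j i) :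
    (matOf c)ᵀ = matOf c := by
  classical
  ext i k
  simp only [Matrix.transpose_apply, matOf, Matrix.of_apply]
  by_cases h : k = i
  · subst h; simp
  · rw [if_neg h, if_neg (fun h' => h h'.symm), hc]

open Matrix ContinuousLinearMap

set_option maxHeartbeats 1000000

/-- The scattering coordinates `(Y, Θ) = ω⁻¹` are canonical:
`{Yᵢ, Θⱼ} = δᵢⱼ`, `{Yᵢ, Yⱼ} = 0`, `{Θᵢ, Θⱼ} = 0` for the canonical Poisson
bracket on `ℝ^{2N}`. -/
theorem stmt11 (N : ℕ) (ε : ℝ) (hε : 0 < ε)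
    (ψ ψx ψθ ψxθ : ℝ → ℝ → ℝ)
    (hC2 : ContDiff ℝ 2 (fun q : ℝ × ℝ => ψ q.1 q.2))
    (hψx : ∀ x t, HasDerivAt (fun x' => ψ x' t) (ψx x t) x)
    (hψθ : ∀ x t, HasDerivAt (fun t' => ψ x t') (ψθ x t) t)
    (hψxθ : ∀ x t, HasDerivAt (fun t' => ψx x t') (ψxθ x t) t)
    (hpos : ∀ x t, 0 ≤ ψxθ x t)
    (hsym : ∀ x t, ψ (-x) (-t) = ψ x t)
    (hrange : ∀ x t, ε ≤ |x| → ψx x t = 0)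
    (ω : (Fin N → ℝ) × (Fin N → ℝ) → (Fin N → ℝ) × (Fin N → ℝ))
    (hω1 : ∀ (y θ : Fin N → ℝ) (i : Fin N),
      y i = (ω (y, θ)).1 i + ∑ j ∈ Finset.univ.erase i,
        ψθ ((ω (y, θ)).1 i - (ω (y, θ)).1 j) (θ i - θ j))
    (hω2 : ∀ (y θ : Fin N → ℝ) (i : Fin N),
      (ω (y, θ)).2 i = θ i + ∑ j ∈ Finset.univ.erase i,
        ψx ((ω (y, θ)).1 i - (ω (y, θ)).1 j) (θ i - θ j))
    (hωC1 : ContDiff ℝ 1 ω)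
    (Y Θ : (Fin N → ℝ) × (Fin N → ℝ) → Fin N → ℝ)
    (hinvC1 : ContDiff ℝ 1 (fun q => (Y q, Θ q)))
    (hinv : ∀ q : (Fin N → ℝ) × (Fin N → ℝ), ω (Y q, Θ q) = q)
    (hinv' : ∀ y θ : Fin N → ℝ, Y (ω (y, θ)) = y ∧ Θ (ω (y, θ)) = θ) :
    ∀ (i j : Fin N) (q : (Fin N → ℝ) × (Fin N → ℝ)),
      (∑ k : Fin N,
        (fderiv ℝ (fun q' => Y q' i) q ((Pi.single k 1 : Fin N → ℝ), (0 : Fin N → ℝ))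
            * fderiv ℝ (fun q' => Θ q' j) q ((0 : Fin N → ℝ), (Pi.single k 1 : Fin N → ℝ))
          - fderiv ℝ (fun q' => Y q' i) q ((0 : Fin N → ℝ), (Pi.single k 1 : Fin N → ℝ))
            * fderiv ℝ (fun q' => Θ q' j) q ((Pi.single k 1 : Fin N → ℝ), (0 : Fin N → ℝ)))
        = if i = j then 1 else 0) ∧
      (∑ k : Fin N,
        (fderiv ℝ (fun q' => Y q' i) q ((Pi.single k 1 : Fin N → ℝ), (0 : Fin N → ℝ))
            * fderiv ℝ (fun q' => Y q' j) q ((0 : Fin N → ℝ), (Pi.single k 1 : Fin N → ℝ))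
          - fderiv ℝ (fun q' => Y q' i) q ((0 : Fin N → ℝ), (Pi.single k 1 : Fin N → ℝ))
            * fderiv ℝ (fun q' => Y q' j) q ((Pi.single k 1 : Fin N → ℝ), (0 : Fin N → ℝ)))
        = 0) ∧
      (∑ k : Fin N,
        (fderiv ℝ (fun q' => Θ q' i) q ((Pi.single k 1 : Fin N → ℝ), (0 : Fin N → ℝ))
            * fderiv ℝ (fun q' => Θ q' j) q ((0 : Fin N → ℝ), (Pi.single k 1 : Fin N → ℝ))
          - fderiv ℝ (fun q' => Θ q' i) q ((0 : Fin N → ℝ), (Pi.single k 1 : Fin N → ℝ))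
            * fderiv ℝ (fun q' => Θ q' j) q ((Pi.single k 1 : Fin N → ℝ), (0 : Fin N → ℝ)))
        = 0) := by
  classical
  obtain ⟨ψxx, ψθθ, hψxFD, hψθFD, hcsym, hdsym, htsym⟩ :=
    psi_calc ψ ψx ψθ ψxθ hC2 hψx hψθ hψxθ hsym
  -- the implicit equations satisfied by (Y, Θ)
  have E1 : ∀ (q' : (Fin N → ℝ) × (Fin N → ℝ)) (i : Fin N),
      Y q' i = q'.1 i + ∑ j ∈ Finset.univ.erase i,
        ψθ (q'.1 i - q'.1 j) (Θ q' i - Θ q' j) := by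
    intro q' i
    have := hω1 (Y q') (Θ q') i
    rw [show ((Y q', Θ q') : _ × _) = (Y q', Θ q') from rfl, hinv q'] at this
    exact this
  have E2 : ∀ (q' : (Fin N → ℝ) × (Fin N → ℝ)) (i : Fin N),
      q'.2 i = Θ q' i + ∑ j ∈ Finset.univ.erase i,
        ψx (q'.1 i - q'.1 j) (Θ q' i - Θ q' j) := by
    intro q' i
    have := hω2 (Y q') (Θ q') i
    rw [hinv q'] at this
    exact this
  -- differentiability of the components
  have hΘC1 : ∀ k, ContDiff ℝ 1 (fun q' => Θ q' k) := by
    intro k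
    exact (((ContinuousLinearMap.proj k).comp
      (ContinuousLinearMap.snd ℝ (Fin N → ℝ) (Fin N → ℝ))).contDiff).comp hinvC1
  have hYC1 : ∀ k, ContDiff ℝ 1 (fun q' => Y q' k) := by
    intro k
    exact (((ContinuousLinearMap.proj k).comp
      (ContinuousLinearMap.fst ℝ (Fin N → ℝ) (Fin N → ℝ))).contDiff).comp hinvC1
  intro i j q
  set P : Fin N → (Fin N → ℝ) := fun l => Pi.single l 1 with hP
  set dθ : Fin N → (((Fin N → ℝ) × (Fin N → ℝ)) →L[ℝ] ℝ) :=
    fun k => fderiv ℝ (fun q' => Θ q' k) q with hdθ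
  set dy : Fin N → (((Fin N → ℝ) × (Fin N → ℝ)) →L[ℝ] ℝ) :=
    fun k => fderiv ℝ (fun q' => Y q' k) q with hdy
  have hθF : ∀ k, HasFDerivAt (fun q' => Θ q' k) (dθ k) q :=
    fun k => ((hΘC1 k).differentiable one_ne_zero q).hasFDerivAt
  have hyF : ∀ k, HasFDerivAt (fun q' => Y q' k) (dy k) q :=
    fun k => ((hYC1 k).differentiable one_ne_zero q).hasFDerivAt
  set c : Fin N → Fin N → ℝ :=
    fun k l => ψxθ (q.1 k - q.1 l) (Θ q k - Θ q l) with hc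
  set d : Fin N → Fin N → ℝ :=
    fun k l => ψxx (q.1 k - q.1 l) (Θ q k - Θ q l) with hd
  set t : Fin N → Fin N → ℝ :=
    fun k l => ψθθ (q.1 k - q.1 l) (Θ q k - Θ q l) with ht
  have hcs : ∀ k l, c k l = c l k := by
    intro k l
    show ψxθ (q.1 k - q.1 l) (Θ q k - Θ q l) = ψxθ (q.1 l - q.1 k) (Θ q l - Θ q k)
    rw [← hcsym (q.1 l - q.1 k) (Θ q l - Θ q k), neg_sub, neg_sub]
  have hds : ∀ k l, d k l = d l k := by
    intro k l
    show ψxx (q.1 k - q.1 l) (Θ q k - Θ q l) = ψxx (q.1 l - q.1 k) (Θ q l - Θ q k)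
    rw [← hdsym (q.1 l - q.1 k) (Θ q l - Θ q k), neg_sub, neg_sub]
  have hts : ∀ k l, t k l = t l k := by
    intro k l
    show ψθθ (q.1 k - q.1 l) (Θ q k - Θ q l) = ψθθ (q.1 l - q.1 k) (Θ q l - Θ q k)
    rw [← htsym (q.1 l - q.1 k) (Θ q l - Θ q k), neg_sub, neg_sub]
  set L1 : Fin N → Fin N → (((Fin N → ℝ) × (Fin N → ℝ)) →L[ℝ] ℝ) := fun k l =>
    (((ContinuousLinearMap.proj k : (Fin N → ℝ) →L[ℝ] ℝ)
        - (ContinuousLinearMap.proj l : (Fin N → ℝ) →L[ℝ] ℝ))).comp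
      (ContinuousLinearMap.fst ℝ (Fin N → ℝ) (Fin N → ℝ)) with hL1
  have hL1F : ∀ k l, HasFDerivAt
      (fun q' : (Fin N → ℝ) × (Fin N → ℝ) => q'.1 k - q'.1 l) (L1 k l) q := by
    intro k l
    exact ((L1 k l).hasFDerivAt).congr_of_eventuallyEq
      (Filter.Eventually.of_forall fun q' => by simp [hL1])
  set Dx : Fin N → Fin N → (((Fin N → ℝ) × (Fin N → ℝ)) →L[ℝ] ℝ) := fun k l =>
    (d k l • ContinuousLinearMap.fst ℝ ℝ ℝ
      + c k l • ContinuousLinearMap.snd ℝ ℝ ℝ).comp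
      ((L1 k l).prod (dθ k - dθ l)) with hDx
  set Dθ2 : Fin N → Fin N → (((Fin N → ℝ) × (Fin N → ℝ)) →L[ℝ] ℝ) := fun k l =>
    (c k l • ContinuousLinearMap.fst ℝ ℝ ℝ
      + t k l • ContinuousLinearMap.snd ℝ ℝ ℝ).comp
      ((L1 k l).prod (dθ k - dθ l)) with hDθ2
  have hDxF : ∀ k l, HasFDerivAt
      (fun q' : (Fin N → ℝ) × (Fin N → ℝ) => ψx (q'.1 k - q'.1 l) (Θ q' k - Θ q' l))
      (Dx k l) q := by
    intro k l
    exact (hψxFD (q.1 k - q.1 l) (Θ q k - Θ q l)).comp q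
      (HasFDerivAt.prodMk (hL1F k l) (HasFDerivAt.sub (hθF k) (hθF l)))
  have hDθ2F : ∀ k l, HasFDerivAt
      (fun q' : (Fin N → ℝ) × (Fin N → ℝ) => ψθ (q'.1 k - q'.1 l) (Θ q' k - Θ q' l))
      (Dθ2 k l) q := by
    intro k l
    exact (hψθFD (q.1 k - q.1 l) (Θ q k - Θ q l)).comp q
      (HasFDerivAt.prodMk (hL1F k l) (HasFDerivAt.sub (hθF k) (hθF l)))
  have hKey2 : ∀ k, dθ k + ∑ l ∈ Finset.univ.erase k, Dx k l
      = (ContinuousLinearMap.proj k).comp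
        (ContinuousLinearMap.snd ℝ (Fin N → ℝ) (Fin N → ℝ)) := by
    intro k
    have hR : HasFDerivAt (fun q' => Θ q' k + ∑ l ∈ Finset.univ.erase k,
        ψx (q'.1 k - q'.1 l) (Θ q' k - Θ q' l))
        (dθ k + ∑ l ∈ Finset.univ.erase k, Dx k l) q :=
      (hθF k).add (HasFDerivAt.fun_sum fun l _ => hDxF k l)
    have hL : HasFDerivAt (fun q' : (Fin N → ℝ) × (Fin N → ℝ) => q'.2 k)
        (dθ k + ∑ l ∈ Finset.univ.erase k, Dx k l) q :=
      hR.congr_of_eventuallyEq (Filter.Eventually.of_forall fun q' => E2 q' k)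
    have hid : HasFDerivAt (fun q' : (Fin N → ℝ) × (Fin N → ℝ) => q'.2 k)
        ((ContinuousLinearMap.proj k).comp
          (ContinuousLinearMap.snd ℝ (Fin N → ℝ) (Fin N → ℝ))) q :=
      (((ContinuousLinearMap.proj k).comp
        (ContinuousLinearMap.snd ℝ (Fin N → ℝ) (Fin N → ℝ))).hasFDerivAt).congr_of_eventuallyEq
        (Filter.Eventually.of_forall fun q' => by simp)
    exact hL.unique hid
  have hKey1 : ∀ k, (ContinuousLinearMap.proj k).comp
        (ContinuousLinearMap.fst ℝ (Fin N → ℝ) (Fin N → ℝ))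
        + ∑ l ∈ Finset.univ.erase k, Dθ2 k l = dy k := by
    intro k
    have hR : HasFDerivAt (fun q' : (Fin N → ℝ) × (Fin N → ℝ) =>
        q'.1 k + ∑ l ∈ Finset.univ.erase k,
          ψθ (q'.1 k - q'.1 l) (Θ q' k - Θ q' l))
        ((ContinuousLinearMap.proj k).comp
          (ContinuousLinearMap.fst ℝ (Fin N → ℝ) (Fin N → ℝ))
          + ∑ l ∈ Finset.univ.erase k, Dθ2 k l) q :=
      ((((ContinuousLinearMap.proj k).comp
        (ContinuousLinearMap.fst ℝ (Fin N → ℝ) (Fin N → ℝ))).hasFDerivAt).congr_of_eventuallyEq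
          (Filter.Eventually.of_forall fun q' => by simp) |>.add
        (HasFDerivAt.fun_sum fun l _ => hDθ2F k l))
    have hL : HasFDerivAt (fun q' => Y q' k)
        ((ContinuousLinearMap.proj k).comp
          (ContinuousLinearMap.fst ℝ (Fin N → ℝ) (Fin N → ℝ))
          + ∑ l ∈ Finset.univ.erase k, Dθ2 k l) q :=
      hR.congr_of_eventuallyEq (Filter.Eventually.of_forall fun q' => E1 q' k)
    exact hL.unique (hyF k)
  set a : Matrix (Fin N) (Fin N) ℝ :=
    Matrix.of (fun k m => dθ k ((P m, 0) : (Fin N → ℝ) × (Fin N → ℝ))) with ha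
  set b : Matrix (Fin N) (Fin N) ℝ :=
    Matrix.of (fun k m => dθ k ((0, P m) : (Fin N → ℝ) × (Fin N → ℝ))) with hb
  set u : Matrix (Fin N) (Fin N) ℝ :=
    Matrix.of (fun k m => dy k ((P m, 0) : (Fin N → ℝ) × (Fin N → ℝ))) with hu
  set v : Matrix (Fin N) (Fin N) ℝ :=
    Matrix.of (fun k m => dy k ((0, P m) : (Fin N → ℝ) × (Fin N → ℝ))) with hv
  have hDxE1 : ∀ k l m, (Dx k l) ((P m, 0) : (Fin N → ℝ) × (Fin N → ℝ))
      = d k l * ((if k = m then (1:ℝ) else 0) - (if l = m then 1 else 0))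
        + c k l * (a k m - a l m) := by
    intro k l m
    simp [hDx, hL1, ha, hP, Pi.single_apply, smul_eq_mul]
  have hDxE2 : ∀ k l m, (Dx k l) ((0, P m) : (Fin N → ℝ) × (Fin N → ℝ))
      = c k l * (b k m - b l m) := by
    intro k l m
    simp [hDx, hL1, hb, hP, Pi.single_apply, smul_eq_mul]
  have hDθ2E1 : ∀ k l m, (Dθ2 k l) ((P m, 0) : (Fin N → ℝ) × (Fin N → ℝ))
      = c k l * ((if k = m then (1:ℝ) else 0) - (if l = m then 1 else 0))
        + t k l * (a k m - a l m) := by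
    intro k l m
    simp [hDθ2, hL1, ha, hP, Pi.single_apply, smul_eq_mul]
  have hDθ2E2 : ∀ k l m, (Dθ2 k l) ((0, P m) : (Fin N → ℝ) × (Fin N → ℝ))
      = t k l * (b k m - b l m) := by
    intro k l m
    simp [hDθ2, hL1, hb, hP, Pi.single_apply, smul_eq_mul]
  -- the four matrix identities
  have hMB : (1 + matOf c) * b = 1 := by
    ext k m
    have h0 := congrArg (fun (L : ((Fin N → ℝ) × (Fin N → ℝ)) →L[ℝ] ℝ) =>
      L ((0 : Fin N → ℝ), P m)) (hKey2 k)
    simp only [ContinuousLinearMap.add_apply, ContinuousLinearMap.sum_apply,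
      ContinuousLinearMap.comp_apply, ContinuousLinearMap.coe_snd'] at h0
    rw [Finset.sum_congr rfl (fun l _ => hDxE2 k l m)] at h0
    rw [Matrix.add_mul, Matrix.one_mul, Matrix.add_apply, matOf_mul_apply,
      Matrix.one_apply]
    have h1 : (ContinuousLinearMap.proj k : (Fin N → ℝ) →L[ℝ] ℝ) (P m)
        = if k = m then (1:ℝ) else 0 := by simp [hP, Pi.single_apply]
    exact h0.trans h1
  have hMA : a + (matOf d * 1 + matOf c * a) = 0 := by
    ext k m
    have h0 := congrArg (fun (L : ((Fin N → ℝ) × (Fin N → ℝ)) →L[ℝ] ℝ) =>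
      L ((P m, 0) : (Fin N → ℝ) × (Fin N → ℝ))) (hKey2 k)
    simp only [ContinuousLinearMap.add_apply, ContinuousLinearMap.sum_apply,
      ContinuousLinearMap.comp_apply, ContinuousLinearMap.coe_snd'] at h0
    rw [Finset.sum_congr rfl (fun l _ => hDxE1 k l m), Finset.sum_add_distrib] at h0
    rw [Matrix.add_apply, Matrix.add_apply, matOf_mul_apply, matOf_mul_apply,
      Matrix.zero_apply]
    simp only [Matrix.one_apply]
    exact h0.trans (by simp)
  have hMU : u = 1 + (matOf c * 1 + matOf t * a) := by
    ext k m
    have h0 := congrArg (fun (L : ((Fin N → ℝ) × (Fin N → ℝ)) →L[ℝ] ℝ) =>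
      L ((P m, 0) : (Fin N → ℝ) × (Fin N → ℝ))) (hKey1 k)
    simp only [ContinuousLinearMap.add_apply, ContinuousLinearMap.sum_apply,
      ContinuousLinearMap.comp_apply, ContinuousLinearMap.coe_fst'] at h0
    rw [Finset.sum_congr rfl (fun l _ => hDθ2E1 k l m), Finset.sum_add_distrib] at h0
    rw [Matrix.add_apply, Matrix.add_apply, matOf_mul_apply, matOf_mul_apply,
      Matrix.one_apply]
    simp only [Matrix.one_apply]
    have h1 : (ContinuousLinearMap.proj k : (Fin N → ℝ) →L[ℝ] ℝ) (P m)
        = if k = m then (1:ℝ) else 0 := by simp [hP, Pi.single_apply]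
    rw [h1] at h0
    exact h0.symm
  have hMV : v = matOf t * b := by
    ext k m
    have h0 := congrArg (fun (L : ((Fin N → ℝ) × (Fin N → ℝ)) →L[ℝ] ℝ) =>
      L ((0 : Fin N → ℝ), P m)) (hKey1 k)
    simp only [ContinuousLinearMap.add_apply, ContinuousLinearMap.sum_apply,
      ContinuousLinearMap.comp_apply, ContinuousLinearMap.coe_fst'] at h0
    rw [Finset.sum_congr rfl (fun l _ => hDθ2E2 k l m)] at h0
    rw [matOf_mul_apply]
    rw [map_zero, zero_add] at h0
    exact h0.symm
  -- matrix algebra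
  set S := matOf c with hS
  set R := matOf d with hR
  set T := matOf t with hT
  have hST : Sᵀ = S := matOf_transpose c hcs
  have hRT : Rᵀ = R := matOf_transpose d hds
  have hTT : Tᵀ = T := matOf_transpose t hts
  have h1 : (1 + S) * b = 1 := hMB
  have h1' : b * (1 + S) = 1 := mul_eq_one_comm.mp h1
  have hbT : bᵀ = b := by
    have h2 : bᵀ * (1 + S) = 1 := by
      have h3 := congrArg Matrix.transpose h1
      rwa [Matrix.transpose_mul, Matrix.transpose_add, Matrix.transpose_one, hST] at h3
    calc bᵀ = bᵀ * ((1 + S) * b) := by rw [h1, Matrix.mul_one]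
    _ = (bᵀ * (1 + S)) * b := by rw [Matrix.mul_assoc]
    _ = b := by rw [h2, Matrix.one_mul]
  have h2 : (1 + S) * a = -R := by
    have h3 := hMA
    rw [Matrix.mul_one] at h3
    have h4 : (a + S * a) + R = 0 := by
      calc (a + S * a) + R = a + (R + S * a) := by abel
      _ = 0 := h3
    rw [Matrix.add_mul, Matrix.one_mul]
    exact eq_neg_of_add_eq_zero_left h4
  have haM : a = -(b * R) := by
    calc a = b * ((1 + S) * a) := by rw [← Matrix.mul_assoc, h1', Matrix.one_mul]
    _ = b * (-R) := by rw [h2]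
    _ = -(b * R) := by rw [Matrix.mul_neg]
  have haT : aᵀ = -(R * b) := by
    rw [haM, Matrix.transpose_neg, Matrix.transpose_mul, hRT, hbT]
  have hu2 : u = 1 + S + T * -(b * R) := by
    rw [hMU, Matrix.mul_one, haM, ← add_assoc]
  have hvT : vᵀ = b * T := by rw [hMV, Matrix.transpose_mul, hTT, hbT]
  have huT : uᵀ = 1 + S + -(R * b) * T := by
    rw [hu2]
    simp only [Matrix.transpose_add, Matrix.transpose_mul, Matrix.transpose_neg,
      Matrix.transpose_one, hST, hRT, hTT, hbT]
  have key1 : u * bᵀ - v * aᵀ = 1 := by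
    rw [hbT, haT, hu2, hMV]
    have hnr : (1 + S + T * -(b * R)) * b - T * b * -(R * b) = (1 + S) * b := by
      noncomm_ring
    rw [hnr, h1]
  have key2 : u * vᵀ - v * uᵀ = 0 := by
    rw [huT, hvT, hu2, hMV]
    have hnr : (1 + S + T * -(b * R)) * (b * T) - T * b * (1 + S + -(R * b) * T)
        = ((1 + S) * b) * T - T * (b * (1 + S)) := by noncomm_ring
    rw [hnr, h1, h1', Matrix.one_mul, Matrix.mul_one, sub_self]
  have key3 : a * bᵀ - b * aᵀ = 0 := by
    rw [hbT, haT, haM]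
    noncomm_ring
  refine ⟨?_, ?_, ?_⟩
  · have e1 : (u * bᵀ - v * aᵀ) i j = ∑ k, (u i k * b j k - v i k * a j k) := by
      rw [Matrix.sub_apply, Matrix.mul_apply, Matrix.mul_apply, ← Finset.sum_sub_distrib]
      exact Finset.sum_congr rfl fun k _ => by
        rw [Matrix.transpose_apply, Matrix.transpose_apply]
    have e2 : (∑ k, (u i k * b j k - v i k * a j k)) = if i = j then 1 else 0 := by
      rw [← e1, key1, Matrix.one_apply]
    rw [← e2]
    simp only [hu, hb, hv, ha, Matrix.of_apply, hdy, hdθ, hP]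
  · have e1 : (u * vᵀ - v * uᵀ) i j = ∑ k, (u i k * v j k - v i k * u j k) := by
      rw [Matrix.sub_apply, Matrix.mul_apply, Matrix.mul_apply, ← Finset.sum_sub_distrib]
      exact Finset.sum_congr rfl fun k _ => by
        rw [Matrix.transpose_apply, Matrix.transpose_apply]
    have e2 : (∑ k, (u i k * v j k - v i k * u j k)) = 0 := by
      rw [← e1, key2, Matrix.zero_apply]
    rw [← e2]
    simp only [hu, hv, Matrix.of_apply, hdy, hP]
  · have e1 : (a * bᵀ - b * aᵀ) i j = ∑ k, (a i k * b j k - b i k * a j k) := by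
      rw [Matrix.sub_apply, Matrix.mul_apply, Matrix.mul_apply, ← Finset.sum_sub_distrib]
      exact Finset.sum_congr rfl fun k _ => by
        rw [Matrix.transpose_apply, Matrix.transpose_apply]
    have e2 : (∑ k, (a i k * b j k - b i k * a j k)) = 0 := by
      rw [← e1, key3, Matrix.zero_apply]
    rw [← e2]
    simp only [ha, hb, Matrix.of_apply, hdθ, hP]
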